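/- Let n ≥ 4, let d and a(1), ..., a(n−1) be integers with 0 < a(i) < d for every i and Σ_{i=1}^{n−1} a(i) < d, and suppose moreover that a(j) = 1 for some j and that the greatest common divisor of the remaining a(i) (i ≠ j) is 1. Let K be the convex hull in ℝ^n of {0, e_1, ..., e_{n−1}, (a(1), ..., a(n−1), d)^T}. Then K is an empty lattice simplex, i.e., K ∩ ℤ^n = {0, e_1, ..., e_{n−1}, (a(1), ..., a(n−1), d)^T}. -/

import Mathlib

open Pointwise

/-- The set of lattice points (points with integer coordinates) of `ℝ^n`. -/
def latticePoints (n : ℕ) : Set (Fin n → ℝ) := {x | ∀ i, ∃ z : ℤ, x i = (z : ℝ)}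

/-- Let `n ≥ 4`, let `d` and the `a i` (`i < n - 1`) be integers with `0 < a i < d` and
`∑_{i<n-1} a i < d`, with the last coordinate of `a` equal to `d`; suppose moreover that
`a j = 1` for some `j < n - 1` and that the gcd of the remaining `a i` (`i < n - 1`,
`i ≠ j`) is `1`.  Then the convex hull `K` of `{0, e_1, …, e_{n-1}, a}` is an empty
lattice simplex: its only lattice points are its vertices. -/
theorem example4_empty (n : ℕ) (hn : 4 ≤ n) (d : ℤ) (a : Fin n → ℤ)
    (ha : ∀ i : Fin n, (i : ℕ) < n - 1 → 0 < a i ∧ a i < d)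
    (hlast : a ⟨n - 1, by omega⟩ = d)
    (hsum : ∑ i ∈ Finset.univ.filter (fun i : Fin n => (i : ℕ) < n - 1), a i < d)
    (j : Fin n) (hj : (j : ℕ) < n - 1) (hj1 : a j = 1)
    (hgcd : (Finset.univ.filter (fun i : Fin n => (i : ℕ) < n - 1 ∧ i ≠ j)).gcd a = 1)
    (S : Set (Fin n → ℝ))
    (hS : S = {0} ∪ {x | ∃ i : Fin n, (i : ℕ) < n - 1 ∧ x = Pi.single i 1} ∪
      {fun i => (a i : ℝ)})
    (K : Set (Fin n → ℝ)) (hK : K = convexHull ℝ S) :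
    AffineIndependent ℝ ((↑) : S → (Fin n → ℝ)) ∧ K ∩ latticePoints n = S := by
  classical
  set m : Fin n := ⟨n - 1, by omega⟩ with hm
  have hlast' : a m = d := hlast
  have hd2 : 2 ≤ d := by have := (ha j hj).2; omega
  have hdR : (0 : ℝ) < (d : ℝ) := by exact_mod_cast (by omega : (0:ℤ) < d)
  set f : Fin n → Fin n → ℝ :=
    fun i => if (i : ℕ) < n - 1 then Pi.single i 1 else fun k => (a k : ℝ) with hf
  -- evaluation lemmas
  have hmval : (m : ℕ) = n - 1 := rfl
  have hieqm : ∀ i : Fin n, ¬ ((i : ℕ) < n - 1) → i = m := by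
    intro i hi; apply Fin.ext; have := i.isLt; simp [hmval]; omega
  have hev : ∀ (c : Fin n → ℝ) (k : Fin n), (k : ℕ) < n - 1 →
      (∑ i, c i • f i) k = c k + c m * (a k : ℝ) := by
    intro c k hk
    have hkm : k ≠ m := by intro h; rw [h] at hk; simp [hmval] at hk
    have hsub : ({k, m} : Finset (Fin n)) ⊆ Finset.univ := Finset.subset_univ _
    have hzero : ∀ i ∈ Finset.univ, i ∉ ({k, m} : Finset (Fin n)) →
        (c i • f i) k = 0 := by
      intro i _ hi
      simp only [Finset.mem_insert, Finset.mem_singleton, not_or] at hi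
      obtain ⟨hik, him⟩ := hi
      by_cases h : (i : ℕ) < n - 1
      · simp [hf, h, Pi.single_apply, Ne.symm hik]
      · exact absurd (hieqm i h) him
    have := (Finset.sum_subset hsub (by intro i hi hni; exact hzero i hi hni)).symm
    calc (∑ i, c i • f i) k = ∑ i, (c i • f i) k := by rw [Finset.sum_apply]
      _ = ∑ i ∈ ({k, m} : Finset (Fin n)), (c i • f i) k := by
          rw [Finset.sum_subset hsub (by intro i hi hni; exact hzero i hi hni)]
      _ = (c k • f k) k + (c m • f m) k := Finset.sum_pair hkm
      _ = c k + c m * (a k : ℝ) := by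
          simp [hf, hk, Pi.single_eq_same, show ¬ ((m : ℕ) < n - 1) by simp [hmval]]
  have hevm : ∀ (c : Fin n → ℝ), (∑ i, c i • f i) m = c m * (d : ℝ) := by
    intro c
    calc (∑ i, c i • f i) m = ∑ i, (c i • f i) m := by rw [Finset.sum_apply]
      _ = (c m • f m) m := by
          apply Finset.sum_eq_single
          · intro i _ him
            have h : (i : ℕ) < n - 1 := by
              by_contra h; exact him (hieqm i h)
            simp [hf, h, Pi.single_apply, fun hh : m = i => him (hh.symm ▸ rfl)]
            intro hmi; exact absurd hmi.symm him
          · intro h; exact absurd (Finset.mem_univ m) h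
      _ = c m * (d : ℝ) := by
          simp [hf, show ¬ ((m : ℕ) < n - 1) by simp [hmval], hlast']
  have hlinf : LinearIndependent ℝ f := by
    rw [Fintype.linearIndependent_iff]
    intro c hc
    have hcm : c m = 0 := by
      have h0 := hevm c
      rw [hc] at h0
      simp only [Pi.zero_apply] at h0
      rcases mul_eq_zero.mp h0.symm with h | h
      · exact h
      · exact absurd h (ne_of_gt hdR)
    intro i
    by_cases hi : (i : ℕ) < n - 1
    · have h0 := hev c i hi
      rw [hc] at h0
      simp only [Pi.zero_apply] at h0
      rw [hcm] at h0; linarith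
    · rw [hieqm i hi]; exact hcm
  have hfne0 : ∀ v ∈ Set.range f, v ≠ (0 : Fin n → ℝ) := by
    rintro v ⟨i, rfl⟩ hv
    by_cases hi : (i : ℕ) < n - 1
    · have := congrFun hv i
      simp [hf, hi, Pi.single_eq_same] at this
    · have := congrFun hv m
      simp [hf, hi] at this
      rw [hlast'] at this
      exact absurd this (by exact_mod_cast (by omega : (d:ℤ) ≠ 0))
  have hrange : Set.range f =
      {x | ∃ i : Fin n, (i : ℕ) < n - 1 ∧ x = Pi.single i 1} ∪ {fun i => (a i : ℝ)} := by
    ext x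
    simp only [Set.mem_range, Set.mem_union, Set.mem_setOf_eq, Set.mem_singleton_iff]
    constructor
    · rintro ⟨i, rfl⟩
      by_cases hi : (i : ℕ) < n - 1
      · exact Or.inl ⟨i, hi, by simp [hf, hi]⟩
      · exact Or.inr (by simp [hf, hi])
    · rintro (⟨i, hi, rfl⟩ | rfl)
      · exact ⟨i, by simp [hf, hi]⟩
      · exact ⟨m, by simp [hf, show ¬ ((m:ℕ) < n - 1) by simp [hmval]]⟩
  have hS0 : S = {0} ∪ Set.range f := by
    rw [hS, hrange, Set.union_assoc]
  have haff : AffineIndependent ℝ ((↑) : S → (Fin n → ℝ)) := by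
    have hli : LinearIndependent ℝ ((↑) : Set.range f → (Fin n → ℝ)) :=
      (linearIndepOn_id_range_iff hlinf.injective).mpr hlinf
    have h := (linearIndependent_set_iff_affineIndependent_vadd_union_singleton ℝ
      hfne0 (0 : Fin n → ℝ)).mp hli
    have himg : (fun v => v +ᵥ (0 : Fin n → ℝ)) '' (Set.range f) = Set.range f := by
      ext x; simp [vadd_eq_add]
    rw [himg] at h
    rw [hS0]
    exact h
  refine ⟨haff, Set.Subset.antisymm ?_ ?_⟩
  · -- K ∩ lattice ⊆ S
    rintro x ⟨hxK, hxL⟩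
    set g : Option (Fin n) → (Fin n → ℝ) := fun o => o.elim 0 f with hg
    have hrg : Set.range g = ({0} : Set (Fin n → ℝ)) ∪ Set.range f := by
      ext y
      simp only [Set.mem_range, Set.mem_union, Set.mem_singleton_iff]
      constructor
      · rintro ⟨o, rfl⟩
        cases o with
        | none => exact Or.inl rfl
        | some i => exact Or.inr ⟨i, rfl⟩
      · rintro (rfl | ⟨i, rfl⟩)
        · exact ⟨none, rfl⟩
        · exact ⟨some i, rfl⟩
    rw [hK, hS0, ← hrg, convexHull_range_eq_exists_affineCombination] at hxK
    obtain ⟨s, w, hw0, hw1, hxeq⟩ := hxK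
    rw [Finset.affineCombination_eq_linear_combination s g w hw1] at hxeq
    set W : Option (Fin n) → ℝ := fun o => if o ∈ s then w o else 0 with hW
    have hW0 : ∀ o, 0 ≤ W o := by
      intro o; by_cases h : o ∈ s
      · simp [hW, h]; exact hw0 o h
      · simp [hW, h]
    have hWs : ∀ (u : Option (Fin n) → (Fin n → ℝ)),
        ∑ o, W o • u o = ∑ o ∈ s, w o • u o := by
      intro u
      rw [← Finset.sum_subset (Finset.subset_univ s)
        (by intro o _ ho; simp [hW, ho])]
      exact Finset.sum_congr rfl (by intro o ho; simp [hW, ho])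
    have hW1 : ∑ o, W o = 1 := by
      rw [← hw1, ← Finset.sum_subset (Finset.subset_univ s)
        (by intro o _ ho; simp [hW, ho])]
      exact Finset.sum_congr rfl (by intro o ho; simp [hW, ho])
    have hWx : ∑ o, W o • g o = x := by rw [hWs]; exact hxeq
    set c : Fin n → ℝ := fun i => W (some i) with hc
    have hsum1 : W none + ∑ i, c i = 1 := by rw [← hW1, Fintype.sum_option]
    have hxsum : ∑ i, c i • f i = x := by
      rw [← hWx, Fintype.sum_option]
      simp [hg]
      rfl
    have hcoord : ∀ k : Fin n, (k : ℕ) < n - 1 → x k = c k + c m * (a k : ℝ) := by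
      intro k hk; rw [← hxsum]; exact hev c k hk
    have hcm : x m = c m * (d : ℝ) := by rw [← hxsum]; exact hevm c
    choose z hz using hxL
    set F' : Finset (Fin n) := Finset.univ.filter (fun i : Fin n => (i : ℕ) < n - 1) with hF'
    have hfilm : Finset.univ.filter (fun i : Fin n => ¬ ((i : ℕ) < n - 1)) = {m} := by
      ext i
      simp only [Finset.mem_filter, Finset.mem_univ, true_and, Finset.mem_singleton]
      constructor
      · exact hieqm i
      · rintro rfl; simp [hmval]
    have hsplit : ∑ i ∈ F', c i + c m = ∑ i, c i := by
      rw [← Finset.sum_filter_add_sum_filter_not Finset.univ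
        (fun i : Fin n => (i : ℕ) < n - 1) c, hfilm, Finset.sum_singleton]
    have hc0 : ∀ i, 0 ≤ c i := fun i => hW0 (some i)
    have hWn0 : 0 ≤ W none := hW0 none
    have hsumF : 0 ≤ ∑ i ∈ F', c i := Finset.sum_nonneg fun i _ => hc0 i
    have hs1 : W none + (∑ i ∈ F', c i + c m) = 1 := by rw [hsplit]; exact hsum1
    have hzm : (z m : ℝ) = c m * (d : ℝ) := by rw [← hz m]; exact hcm
    have hcm1 : c m ≤ 1 := by linarith
    have hzm0 : 0 ≤ z m := by
      have : (0 : ℝ) ≤ (z m : ℝ) := by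
        rw [hzm]; exact mul_nonneg (hc0 m) (le_of_lt hdR)
      exact_mod_cast this
    have hzmd : z m ≤ d := by
      have : (z m : ℝ) ≤ (d : ℝ) := by
        rw [hzm]
        nlinarith [hc0 m]
      exact_mod_cast this
    by_cases h0 : z m = 0
    · -- case μ = 0
      have hcm0 : c m = 0 := by
        have : (0 : ℝ) = c m * d := by rw [← hzm, h0]; simp
        rcases mul_eq_zero.mp this.symm with h | h
        · exact h
        · exact absurd h (ne_of_gt hdR)
      have hxk : ∀ k ∈ F', x k = c k := by
        intro k hk
        rw [hcoord k (Finset.mem_filter.mp hk).2, hcm0, zero_mul, add_zero]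
      have hzk0 : ∀ k ∈ F', 0 ≤ z k := by
        intro k hk
        have : (0 : ℝ) ≤ (z k : ℝ) := by rw [← hz k, hxk k hk]; exact hc0 k
        exact_mod_cast this
      have hzsum : ∑ k ∈ F', z k ≤ 1 := by
        have h1 : ∑ k ∈ F', (z k : ℝ) = ∑ k ∈ F', c k := by
          refine Finset.sum_congr rfl fun k hk => ?_
          rw [← hz k, hxk k hk]
        have h2 : (↑(∑ k ∈ F', z k) : ℝ) ≤ 1 := by push_cast; rw [h1]; linarith
        exact_mod_cast h2
      by_cases hall : ∀ k ∈ F', z k = 0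
      · have hx0 : x = 0 := by
          funext k
          by_cases hk : (k : ℕ) < n - 1
          · have : k ∈ F' := Finset.mem_filter.mpr ⟨Finset.mem_univ k, hk⟩
            rw [hz k, hall k this]; simp
          · rw [hieqm k hk, hcm, hcm0]; simp
        rw [hS]
        exact Or.inl (Or.inl hx0)
      · push_neg at hall
        obtain ⟨k, hkF, hk0⟩ := hall
        have hzk1 : 1 ≤ z k := by
          have := hzk0 k hkF; omega
        have herase : ∑ i ∈ F'.erase k, z i + z k = ∑ i ∈ F', z i :=
          Finset.sum_erase_add F' z hkF
        have heo : 0 ≤ ∑ i ∈ F'.erase k, z i :=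
          Finset.sum_nonneg fun i hi => hzk0 i (Finset.mem_of_mem_erase hi)
        have hzk : z k = 1 := by omega
        have hez : ∀ i ∈ F'.erase k, z i = 0 := by
          have hez0 : ∑ i ∈ F'.erase k, z i = 0 := by omega
          exact (Finset.sum_eq_zero_iff_of_nonneg
            fun i hi => hzk0 i (Finset.mem_of_mem_erase hi)).mp hez0
        have hxs : x = Pi.single k 1 := by
          funext i
          by_cases hi : (i : ℕ) < n - 1
          · have hiF : i ∈ F' := Finset.mem_filter.mpr ⟨Finset.mem_univ i, hi⟩
            by_cases hik : i = k
            · subst hik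
              rw [hz i, hzk, Pi.single_eq_same]; norm_num
            · rw [hz i, hez i (Finset.mem_erase.mpr ⟨hik, hiF⟩),
                Pi.single_eq_of_ne hik]; norm_num
          · have him : i = m := hieqm i hi
            have hkm : m ≠ k := by
              intro h
              have := (Finset.mem_filter.mp hkF).2
              rw [← h, hmval] at this; omega
            rw [him, hcm, hcm0, Pi.single_eq_of_ne hkm]; norm_num
        rw [hS]
        exact Or.inl (Or.inr ⟨k, (Finset.mem_filter.mp hkF).2, hxs⟩)
    · by_cases hdd : z m = d
      · -- case μ = 1
        have hcmd : c m = 1 := by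
          have h1 : (d : ℝ) = c m * d := by rw [← hzm, hdd]
          have := mul_right_cancel₀ (ne_of_gt hdR) (h1.symm.trans (one_mul (d:ℝ)).symm)
          linarith [this]
        have hez : ∀ i ∈ F', c i = 0 := by
          have h1 : ∑ i ∈ F', c i = 0 := by linarith
          intro i hi
          have := Finset.sum_eq_zero_iff_of_nonneg (fun i _ => hc0 i) |>.mp h1 i hi
          exact this
        have hxa : x = fun i => (a i : ℝ) := by
          funext i
          by_cases hi : (i : ℕ) < n - 1
          · rw [hcoord i hi, hez i (Finset.mem_filter.mpr ⟨Finset.mem_univ i, hi⟩),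
              hcmd]; ring
          · rw [hieqm i hi, hcm, hcmd, hlast']; ring
        rw [hS]
        exact Or.inr hxa
      · -- case 0 < z m < d : contradiction
        exfalso
        have hzmpos : 0 < z m := by omega
        have hzmltd : z m < d := by omega
        have hcmpos : 0 < c m := by
          have h1 : (0 : ℝ) < (z m : ℝ) := by exact_mod_cast hzmpos
          rw [hzm] at h1
          rcases lt_or_eq_of_le (hc0 m) with h | h
          · exact h
          · exfalso; rw [← h] at h1; simp at h1
        have hjF : j ∈ F' := Finset.mem_filter.mpr ⟨Finset.mem_univ j, hj⟩
        have hxj : x j = c j + c m := by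
          rw [hcoord j hj, hj1]; norm_num
        have hcjle : c j ≤ ∑ i ∈ F', c i :=
          Finset.single_le_sum (fun i _ => hc0 i) hjF
        have hxjle : x j ≤ 1 := by rw [hxj]; linarith
        have hxjpos : 0 < x j := by rw [hxj]; linarith [hc0 j]
        have hzj : z j = 1 := by
          have h1 : (0 : ℝ) < (z j : ℝ) := by rw [← hz j]; exact hxjpos
          have h2 : (z j : ℝ) ≤ 1 := by rw [← hz j]; exact hxjle
          have h1' : 0 < z j := by exact_mod_cast h1
          have h2' : z j ≤ 1 := by exact_mod_cast h2
          omega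
        have hcj : c j = 1 - c m := by
          have : (z j : ℝ) = x j := (hz j).symm
          rw [hzj] at this
          push_cast at this
          rw [hxj] at this
          linarith
        have herase : ∑ i ∈ F'.erase j, c i + c j = ∑ i ∈ F', c i :=
          Finset.sum_erase_add F' c hjF
        have heo : 0 ≤ ∑ i ∈ F'.erase j, c i :=
          Finset.sum_nonneg fun i hi => hc0 i
        have hez : ∀ i ∈ F'.erase j, c i = 0 := by
          have h1 : ∑ i ∈ F'.erase j, c i = 0 := by linarith
          exact (Finset.sum_eq_zero_iff_of_nonneg fun i _ => hc0 i).mp h1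
        -- divisibility
        set F : Finset (Fin n) :=
          Finset.univ.filter (fun i : Fin n => (i : ℕ) < n - 1 ∧ i ≠ j) with hF
        have hdvd : ∀ i ∈ F, d ∣ z m * a i := by
          intro i hi
          obtain ⟨hi1, hi2⟩ : (i : ℕ) < n - 1 ∧ i ≠ j := by
            simpa only [hF, Finset.mem_filter, Finset.mem_univ, true_and] using hi
          have hie : i ∈ F'.erase j :=
            Finset.mem_erase.mpr ⟨hi2, Finset.mem_filter.mpr ⟨Finset.mem_univ i, hi1⟩⟩
          have hci : c i = 0 := hez i hie
          have hxi : (z i : ℝ) = c m * (a i : ℝ) := by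
            rw [← hz i, hcoord i hi1, hci, zero_add]
          have hcast : (↑(z i * d) : ℝ) = (↑(z m * a i) : ℝ) := by
            push_cast
            linear_combination (d : ℝ) * hxi - (a i : ℝ) * hzm
          have hzd : z i * d = z m * a i := by exact_mod_cast hcast
          exact ⟨z i, by linear_combination -hzd⟩
        have hd1 : d ∣ z m := by
          have h1 : d ∣ F.gcd (fun i => z m * a i) := Finset.dvd_gcd hdvd
          rw [Finset.gcd_mul_left] at h1
          rw [hgcd] at h1
          rwa [mul_one, Int.normalize_of_nonneg hzm0] at h1
        have := Int.le_of_dvd hzmpos hd1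
        omega
  · -- S ⊆ K ∩ lattice
    intro x hx
    refine ⟨hK ▸ subset_convexHull ℝ S hx, ?_⟩
    rw [hS] at hx
    rcases hx with (hx | ⟨i, hi, rfl⟩) | hx
    · rw [Set.mem_singleton_iff] at hx
      subst hx
      intro k; exact ⟨0, by simp⟩
    · intro k
      by_cases hk : k = i
      · subst hk; exact ⟨1, by simp [Pi.single_eq_same]⟩
      · exact ⟨0, by simp [Pi.single_eq_of_ne hk]⟩
    · rw [Set.mem_singleton_iff] at hx
      subst hx
      intro k; exact ⟨a k, rfl⟩
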